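/- Let D ∈ ℝ^{p×p'} (p ≤ p') have singular values σ₁ ≥ … ≥ σ_p, and let α, α' be independent and uniformly distributed on the unit balls of ℝ^p and ℝ^{p'} respectively. Then E[α(I_p − DDᵀ)αᵀ + α'(I_{p'} − DᵀD)α'ᵀ + 2α(D − DDᵀD)α'ᵀ] = (p − ∑_j σ_j²)/(p+2) + (p' − ∑_j σ_j²)/(p'+2). -/

import Mathlib

open Matrix MeasureTheory BigOperators

section TD15Aux

open Set Metric

noncomputable section

namespace TD15


def Bset (n : ℕ) : Set (Fin n → ℝ) := {x | ∑ k, (x k) ^ 2 ≤ 1}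

abbrev Euc (n : ℕ) := EuclideanSpace ℝ (Fin n)

lemma measurableSet_Bset (n : ℕ) : MeasurableSet (Bset n) :=
  measurableSet_le (by fun_prop) measurable_const

lemma preimage_Bset (n : ℕ) :
    ((MeasurableEquiv.toLp 2 (Fin n → ℝ)).symm) ⁻¹' (Bset n) = closedBall (0 : Euc n) 1 := by
  ext y
  have hy : ((MeasurableEquiv.toLp 2 (Fin n → ℝ)).symm) y = fun k => y k := rfl
  simp only [Set.mem_preimage, Bset, Set.mem_setOf_eq, hy, mem_closedBall_zero_iff]
  rw [EuclideanSpace.norm_eq]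
  constructor
  · intro h
    have : Real.sqrt (∑ i, ‖y i‖ ^ 2) ≤ Real.sqrt 1 := by
      apply Real.sqrt_le_sqrt
      simpa [Real.norm_eq_abs, sq_abs] using h
    simpa using this
  · intro h
    have h2 : ∑ i, ‖y i‖ ^ 2 ≤ 1 := by
      have := Real.sq_sqrt (x := ∑ i, ‖y i‖ ^ 2) (by positivity)
      nlinarith [Real.sqrt_nonneg (∑ i, ‖y i‖ ^ 2)]
    simpa [Real.norm_eq_abs, sq_abs] using h2

lemma volume_Bset (n : ℕ) :
    volume (Bset n) = volume (closedBall (0 : Euc n) 1) := by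
  rw [← preimage_Bset n]
  exact ((EuclideanSpace.volume_preserving_symm_measurableEquiv_toLp (Fin n)).measure_preimage
    (measurableSet_Bset n).nullMeasurableSet).symm

lemma isCompact_Bset (n : ℕ) : IsCompact (Bset n) := by
  apply Metric.isCompact_of_isClosed_isBounded
  · exact isClosed_le (by fun_prop) continuous_const
  · apply (Metric.isBounded_closedBall (x := (0 : Fin n → ℝ)) (r := 1)).subset
    intro x hx
    rw [mem_closedBall_zero_iff]
    apply pi_norm_le_iff_of_nonneg zero_le_one |>.2
    intro i
    rw [Real.norm_eq_abs, ← sq_le_one_iff_abs_le_one]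
    exact le_trans (Finset.single_le_sum (f := fun k => (x k) ^ 2)
      (fun k _ => sq_nonneg (x k)) (Finset.mem_univ i)) hx

lemma volume_Bset_ne_zero (n : ℕ) : volume (Bset n) ≠ 0 := by
  have hO : IsOpen {x : Fin n → ℝ | ∑ k, (x k) ^ 2 < 1} :=
    isOpen_lt (by fun_prop) continuous_const
  have h0 : (0 : Fin n → ℝ) ∈ {x : Fin n → ℝ | ∑ k, (x k) ^ 2 < 1} := by simp
  have hpos := hO.measure_pos volume ⟨0, h0⟩
  have hsub : {x : Fin n → ℝ | ∑ k, (x k) ^ 2 < 1} ⊆ Bset n := fun x hx => le_of_lt (show ∑ k, (x k) ^ 2 < 1 from hx)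
  exact fun h => hpos.ne' (measure_mono_null hsub h)

lemma volume_Bset_ne_top (n : ℕ) : volume (Bset n) ≠ ⊤ :=
  (isCompact_Bset n).measure_lt_top.ne


lemma setIntegral_transfer (n : ℕ) (g : (Fin n → ℝ) → ℝ) :
    ∫ x in Bset n, g x
      = ∫ y in closedBall (0 : Euc n) 1, g (((MeasurableEquiv.toLp 2 (Fin n → ℝ)).symm) y) := by
  rw [← (EuclideanSpace.volume_preserving_symm_measurableEquiv_toLp (Fin n)).setIntegral_preimage_emb
    ((MeasurableEquiv.toLp 2 (Fin n → ℝ)).symm).measurableEmbedding g (Bset n), preimage_Bset n]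

lemma integral_normsq_cb (n : ℕ) (hn : 0 < n) :
    ∫ y in closedBall (0 : Euc n) 1, ‖y‖ ^ 2
      = (volume (Bset n)).toReal * (n / (n + 2)) := by
  haveI : Nonempty (Fin n) := ⟨⟨0, hn⟩⟩
  haveI : Nontrivial (Euc n) := inferInstance
  have h := integral_fun_norm_addHaar (volume : Measure (Euc n))
    (fun r : ℝ => if r ≤ 1 then r ^ 2 else (0 : ℝ))
  have hdim : Module.finrank ℝ (Euc n) = n := by simp [finrank_euclideanSpace]
  rw [hdim] at h
  have hL : (∫ x : Euc n, (if ‖x‖ ≤ 1 then ‖x‖ ^ 2 else (0:ℝ)))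
      = ∫ y in closedBall (0 : Euc n) 1, ‖y‖ ^ 2 := by
    have hpt : ∀ x : Euc n, (if ‖x‖ ≤ 1 then ‖x‖ ^ 2 else (0:ℝ))
        = (closedBall (0 : Euc n) 1).indicator (fun y => ‖y‖ ^ 2) x := by
      intro x
      classical
      rw [Set.indicator_apply]
      by_cases hx : x ∈ closedBall (0 : Euc n) 1
      · rw [if_pos hx, if_pos (mem_closedBall_zero_iff.mp hx)]
      · rw [if_neg hx, if_neg (fun h => hx (mem_closedBall_zero_iff.mpr h))]
    simp_rw [hpt]
    rw [integral_indicator measurableSet_closedBall]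
  have hR : (∫ r in Set.Ioi (0:ℝ), r ^ (n - 1) • (if r ≤ 1 then r ^ 2 else (0:ℝ)))
      = 1 / (n + 2) := by
    have : ∀ r : ℝ, r ^ (n - 1) • (if r ≤ 1 then r ^ 2 else (0:ℝ))
        = Set.indicator (Set.Iic (1:ℝ)) (fun r => r ^ (n + 1)) r := by
      intro r
      simp only [smul_eq_mul, mul_ite, mul_zero, Set.indicator_apply, Set.mem_Iic]
      split_ifs with hr
      · rw [← pow_add]
        congr 1
        omega
      · rfl
    simp_rw [this]
    rw [setIntegral_indicator measurableSet_Iic]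
    have hIoc : Set.Ioi (0:ℝ) ∩ Set.Iic 1 = Set.Ioc (0:ℝ) 1 := Set.Ioi_inter_Iic
    rw [hIoc, ← intervalIntegral.integral_of_le zero_le_one, integral_pow]
    simp
    ring
  rw [hL, hR] at h
  rw [h, volume_Bset n, Measure.addHaar_closedBall_eq_addHaar_ball]
  simp only [nsmul_eq_mul, smul_eq_mul, measureReal_def]
  ring


-- symmetry via coordinate permutation
lemma setIntegral_coord_sq_swap (n : ℕ) (i j : Fin n) :
    ∫ x in Bset n, (x i) ^ 2 = ∫ x in Bset n, (x j) ^ 2 := by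
  classical
  set e : Fin n ≃ Fin n := Equiv.swap i j with he
  have hmp := volume_measurePreserving_piCongrLeft (fun _ : Fin n => ℝ) e
  set g : (Fin n → ℝ) ≃ᵐ (Fin n → ℝ) := MeasurableEquiv.piCongrLeft (fun _ : Fin n => ℝ) e
    with hg
  have happ : ∀ (x : Fin n → ℝ) (k : Fin n), g x (e k) = x k := by
    intro x k
    exact Equiv.piCongrLeft_apply_apply (fun _ : Fin n => ℝ) e x k
  have hpre : g ⁻¹' (Bset n) = Bset n := by
    ext x
    have hsum : ∑ k, (g x k) ^ 2 = ∑ k, (x k) ^ 2 := by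
      rw [← Equiv.sum_comp e (fun k => (g x k) ^ 2)]
      exact Finset.sum_congr rfl fun k _ => by rw [happ]
    simp only [Set.mem_preimage, Bset, Set.mem_setOf_eq, hsum]
  have := hmp.setIntegral_preimage_emb g.measurableEmbedding
    (fun y => (y i) ^ 2) (Bset n)
  rw [hpre] at this
  rw [← this]
  apply setIntegral_congr_fun (measurableSet_Bset n)
  intro x _
  have : g x i = x j := by
    have := happ x j
    rwa [he, Equiv.swap_apply_right] at this
  simp [this]

-- negation of one coordinate
lemma negCoord_measurePreserving (n : ℕ) (i : Fin n) :
    MeasurePreserving (fun (x : Fin n → ℝ) (k : Fin n) =>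
      (if k = i then -(x k) else x k)) volume volume := by
  classical
  have h := volume_preserving_pi (f := fun (k : Fin n) (t : ℝ) => if k = i then -t else t) ?_
  · exact h
  · intro k
    by_cases hk : k = i
    · simpa [hk] using (Measure.measurePreserving_neg (volume : Measure ℝ))
    · simp only [hk, ↓reduceIte]; exact MeasurePreserving.id _

def negCoordEquiv (n : ℕ) (i : Fin n) : (Fin n → ℝ) ≃ᵐ (Fin n → ℝ) where
  toFun := fun x k => if k = i then -(x k) else x k
  invFun := fun x k => if k = i then -(x k) else x k
  left_inv := fun x => by
    funext k
    by_cases hk : k = i <;> simp [hk]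
  right_inv := fun x => by
    funext k
    by_cases hk : k = i <;> simp [hk]
  measurable_toFun := (negCoord_measurePreserving n i).measurable
  measurable_invFun := (negCoord_measurePreserving n i).measurable

lemma negCoord_preimage (n : ℕ) (i : Fin n) :
    (negCoordEquiv n i) ⁻¹' (Bset n) = Bset n := by
  classical
  ext x
  have hsum : ∑ k, ((negCoordEquiv n i) x k) ^ 2 = ∑ k, (x k) ^ 2 := by
    apply Finset.sum_congr rfl
    intro k _
    show (if k = i then -(x k) else x k) ^ 2 = (x k) ^ 2
    split_ifs <;> ring
  simp only [Set.mem_preimage, Bset, Set.mem_setOf_eq, hsum]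

lemma setIntegral_coord_mul_ne (n : ℕ) {i j : Fin n} (hij : i ≠ j) :
    ∫ x in Bset n, x i * x j = 0 := by
  classical
  have key := (negCoord_measurePreserving n i).setIntegral_preimage_emb
    (negCoordEquiv n i).measurableEmbedding (fun y => y i * y j) (Bset n)
  rw [show (fun (x : Fin n → ℝ) (k : Fin n) => (if k = i then -(x k) else x k))
      = ⇑(negCoordEquiv n i) from rfl] at key
  rw [negCoord_preimage] at key
  have hptw : ∀ x : Fin n → ℝ, (negCoordEquiv n i) x i * (negCoordEquiv n i) x j
      = -(x i * x j) := by
    intro x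
    show (if i = i then -(x i) else x i) * (if j = i then -(x j) else x j) = -(x i * x j)
    rw [if_pos rfl, if_neg (fun h => hij h.symm)]
    ring
  have : ∫ x in Bset n, x i * x j = ∫ x in Bset n, -(x i * x j) := by
    conv_lhs => rw [← key]
    apply setIntegral_congr_fun (measurableSet_Bset n)
    intro x _
    exact hptw x
  rw [integral_neg] at this
  linarith

lemma setIntegral_coord (n : ℕ) (i : Fin n) :
    ∫ x in Bset n, x i = 0 := by
  classical
  have key := (negCoord_measurePreserving n i).setIntegral_preimage_emb
    (negCoordEquiv n i).measurableEmbedding (fun y => y i) (Bset n)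
  rw [show (fun (x : Fin n → ℝ) (k : Fin n) => (if k = i then -(x k) else x k))
      = ⇑(negCoordEquiv n i) from rfl] at key
  rw [negCoord_preimage] at key
  have : ∫ x in Bset n, x i = ∫ x in Bset n, -(x i) := by
    conv_lhs => rw [← key]
    apply setIntegral_congr_fun (measurableSet_Bset n)
    intro x _
    show (if i = i then -(x i) else x i) = -(x i)
    rw [if_pos rfl]
  rw [integral_neg] at this
  linarith


def ballMeasure (n : ℕ) : Measure (Fin n → ℝ) :=
  (volume (Bset n))⁻¹ • volume.restrict (Bset n)

instance isProb_ballMeasure (n : ℕ) : IsProbabilityMeasure (ballMeasure n) := by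
  constructor
  rw [ballMeasure, Measure.smul_apply, Measure.restrict_apply MeasurableSet.univ,
    Set.univ_inter, smul_eq_mul, ENNReal.inv_mul_cancel (volume_Bset_ne_zero n)
    (volume_Bset_ne_top n)]

lemma integrable_ballMeasure (n : ℕ) {g : (Fin n → ℝ) → ℝ} (hg : Continuous g) :
    Integrable g (ballMeasure n) := by
  apply Integrable.smul_measure
  · exact hg.continuousOn.integrableOn_compact (isCompact_Bset n)
  · exact ENNReal.inv_ne_top.mpr (volume_Bset_ne_zero n)

lemma toReal_vol_pos (n : ℕ) : 0 < (volume (Bset n)).toReal :=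
  ENNReal.toReal_pos (volume_Bset_ne_zero n) (volume_Bset_ne_top n)

lemma setIntegral_coord_sq (n : ℕ) (i : Fin n) :
    ∫ x in Bset n, (x i) ^ 2 = (volume (Bset n)).toReal / (n + 2) := by
  have hn : 0 < n := i.pos
  have hsum : ∑ k : Fin n, ∫ x in Bset n, (x k) ^ 2
      = (volume (Bset n)).toReal * (n / (n + 2)) := by
    rw [← integral_finset_sum]
    · rw [setIntegral_transfer n (fun x => ∑ k, (x k) ^ 2)]
      rw [← integral_normsq_cb n hn]
      apply setIntegral_congr_fun measurableSet_closedBall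
      intro y _
      have : ∀ k, (((MeasurableEquiv.toLp 2 (Fin n → ℝ)).symm) y) k = y k := fun _ => rfl
      simp_rw [this]
      rw [EuclideanSpace.norm_eq, Real.sq_sqrt (by positivity)]
      exact Finset.sum_congr rfl fun k _ => by rw [Real.norm_eq_abs, sq_abs]
    · intro k _
      exact ((continuous_apply k).pow 2).continuousOn.integrableOn_compact (isCompact_Bset n)
  have hconst : ∀ k : Fin n, ∫ x in Bset n, (x k) ^ 2 = ∫ x in Bset n, (x i) ^ 2 :=
    fun k => setIntegral_coord_sq_swap n k i
  rw [Finset.sum_congr rfl (fun k _ => hconst k), Finset.sum_const, Finset.card_univ,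
    Fintype.card_fin, nsmul_eq_mul] at hsum
  have hn' : (n : ℝ) ≠ 0 := Nat.cast_ne_zero.mpr hn.ne'
  field_simp at hsum ⊢
  apply mul_left_cancel₀ hn'
  rw [hsum]

lemma moment2 (n : ℕ) (i j : Fin n) :
    ∫ x, x i * x j ∂(ballMeasure n) = if i = j then 1 / ((n : ℝ) + 2) else 0 := by
  rw [ballMeasure, integral_smul_measure]
  by_cases hij : i = j
  · subst hij
    rw [if_pos rfl]
    have : (fun x : Fin n → ℝ => x i * x i) = fun x => (x i) ^ 2 := by
      funext x; ring
    rw [this, setIntegral_coord_sq n i, ENNReal.toReal_inv, smul_eq_mul]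
    rw [div_eq_mul_inv, ← mul_assoc, inv_mul_cancel₀ (toReal_vol_pos n).ne']
    rw [one_mul, one_div]
  · rw [if_neg hij, setIntegral_coord_mul_ne n hij, smul_zero]

lemma moment1 (n : ℕ) (i : Fin n) : ∫ x, x i ∂(ballMeasure n) = 0 := by
  rw [ballMeasure, integral_smul_measure, setIntegral_coord n i, smul_zero]

lemma continuous_quadform (n : ℕ) (A : Matrix (Fin n) (Fin n) ℝ) :
    Continuous fun x : Fin n → ℝ => x ⬝ᵥ (A *ᵥ x) := by
  simp only [dotProduct, mulVec]
  fun_prop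

lemma integral_quadform (n : ℕ) (A : Matrix (Fin n) (Fin n) ℝ) :
    ∫ x, x ⬝ᵥ (A *ᵥ x) ∂(ballMeasure n) = A.trace / ((n : ℝ) + 2) := by
  have hptw : ∀ x : Fin n → ℝ, x ⬝ᵥ (A *ᵥ x) = ∑ i, ∑ j, A i j * (x i * x j) := by
    intro x
    simp only [dotProduct, mulVec, Finset.mul_sum]
    exact Finset.sum_congr rfl fun i _ => Finset.sum_congr rfl fun j _ => by ring
  simp_rw [hptw]
  rw [integral_finset_sum]
  · have : ∀ i : Fin n, ∫ x, (∑ j, A i j * (x i * x j)) ∂(ballMeasure n)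
        = A i i / ((n : ℝ) + 2) := by
      intro i
      rw [integral_finset_sum]
      · have : ∀ j : Fin n, ∫ x, A i j * (x i * x j) ∂(ballMeasure n)
            = A i j * (if i = j then 1 / ((n : ℝ) + 2) else 0) := by
          intro j
          rw [integral_const_mul, moment2]
        rw [Finset.sum_congr rfl fun j _ => this j]
        simp [Finset.sum_ite_eq, mul_ite, div_eq_mul_inv, one_mul]
      · intro j _
        apply integrable_ballMeasure
        fun_prop
    rw [Finset.sum_congr rfl fun i _ => this i, Matrix.trace, Finset.sum_div]
    rfl
  · intro i _
    apply integrable_ballMeasure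
    fun_prop

lemma integral_linform (n : ℕ) (c : Fin n → ℝ) :
    ∫ x, (∑ j, c j * x j) ∂(ballMeasure n) = 0 := by
  rw [integral_finset_sum]
  · rw [Finset.sum_congr rfl fun j _ => by rw [integral_const_mul, moment1, mul_zero]]
    simp
  · intro j _
    apply integrable_ballMeasure
    fun_prop


lemma trace_sigma (p p' : ℕ) (hp : p ≤ p') (σ : Fin p → ℝ) :
    ((Matrix.of fun (i : Fin p) (j : Fin p') =>
      if (i : ℕ) = (j : ℕ) then σ i else 0) *
      (Matrix.of fun (i : Fin p) (j : Fin p') =>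
      if (i : ℕ) = (j : ℕ) then σ i else 0)ᵀ).trace = ∑ j : Fin p, (σ j) ^ 2 := by
  classical
  rw [Matrix.trace]
  apply Finset.sum_congr rfl
  intro i _
  rw [Matrix.diag_apply, Matrix.mul_apply]
  rw [Finset.sum_eq_single (Fin.castLE hp i)]
  · simp [Matrix.transpose_apply, sq]
  · intro b _ hb
    have hne : (i : ℕ) ≠ (b : ℕ) := by
      intro h
      apply hb
      apply Fin.ext
      simp [← h]
    simp [Matrix.transpose_apply, hne]
  · intro h
    exact absurd (Finset.mem_univ _) h

lemma trace_DDT (p p' : ℕ) (hp : p ≤ p')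
    (D : Matrix (Fin p) (Fin p') ℝ)
    (U : Matrix (Fin p) (Fin p) ℝ) (V : Matrix (Fin p') (Fin p') ℝ)
    (σ : Fin p → ℝ) (hU : Uᵀ * U = 1) (hV : Vᵀ * V = 1)
    (hD : D = U * (Matrix.of fun (i : Fin p) (j : Fin p') =>
      if (i : ℕ) = (j : ℕ) then σ i else 0) * Vᵀ) :
    (D * Dᵀ).trace = ∑ j : Fin p, (σ j) ^ 2 ∧
    (Dᵀ * D).trace = ∑ j : Fin p, (σ j) ^ 2 := by
  set S := (Matrix.of fun (i : Fin p) (j : Fin p') =>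
      if (i : ℕ) = (j : ℕ) then σ i else 0) with hS
  have h1 : D * Dᵀ = U * (S * Sᵀ) * Uᵀ := by
    rw [hD]
    simp only [Matrix.transpose_mul, Matrix.transpose_transpose]
    calc U * S * Vᵀ * (V * (Sᵀ * Uᵀ)) = U * S * (Vᵀ * V) * (Sᵀ * Uᵀ) := by
            simp only [Matrix.mul_assoc]
      _ = U * (S * Sᵀ) * Uᵀ := by rw [hV, Matrix.mul_one]; simp only [Matrix.mul_assoc]
  have h2 : Dᵀ * D = V * (Sᵀ * S) * Vᵀ := by
    rw [hD]
    simp only [Matrix.transpose_mul, Matrix.transpose_transpose]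
    calc V * (Sᵀ * Uᵀ) * (U * S * Vᵀ) = V * Sᵀ * (Uᵀ * U) * (S * Vᵀ) := by
            simp only [Matrix.mul_assoc]
      _ = V * (Sᵀ * S) * Vᵀ := by rw [hU, Matrix.mul_one]; simp only [Matrix.mul_assoc]
  constructor
  · rw [h1, Matrix.trace_mul_comm (U * (S * Sᵀ)) Uᵀ, ← Matrix.mul_assoc, hU, Matrix.one_mul]
    exact trace_sigma p p' hp σ
  · rw [h2, Matrix.trace_mul_comm (V * (Sᵀ * S)) Vᵀ, ← Matrix.mul_assoc, hV, Matrix.one_mul,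
      Matrix.trace_mul_comm]
    exact trace_sigma p p' hp σ


end TD15

end

end TD15Aux

open TD15 in
/-- the expected asymptotic TD quadratic form, with `α, α'`
independent and uniform on the unit balls of `ℝ^p` and `ℝ^{p'}`, equals
`(p − ∑σ_j²)/(p+2) + (p' − ∑σ_j²)/(p'+2)`. -/

theorem expected_td_quadform_uniform_balls (p p' : ℕ) (hp : p ≤ p')
    (D : Matrix (Fin p) (Fin p') ℝ)
    (U : Matrix (Fin p) (Fin p) ℝ) (V : Matrix (Fin p') (Fin p') ℝ)
    (σ : Fin p → ℝ) (hU : Uᵀ * U = 1) (hV : Vᵀ * V = 1)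
    (hσmono : Antitone σ) (hσ : ∀ j, 0 ≤ σ j)
    (hD : D = U * (Matrix.of fun (i : Fin p) (j : Fin p') =>
      if (i : ℕ) = (j : ℕ) then σ i else 0) * Vᵀ) :
    (∫ α : Fin p → ℝ,
      ∫ α' : Fin p' → ℝ,
        (α ⬝ᵥ (((1 : Matrix (Fin p) (Fin p) ℝ) - D * Dᵀ) *ᵥ α)
          + α' ⬝ᵥ (((1 : Matrix (Fin p') (Fin p') ℝ) - Dᵀ * D) *ᵥ α')
          + 2 * (α ⬝ᵥ ((D - D * Dᵀ * D) *ᵥ α')))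
      ∂((volume {x : Fin p' → ℝ | ∑ k : Fin p', (x k) ^ 2 ≤ 1})⁻¹ •
          volume.restrict {x : Fin p' → ℝ | ∑ k : Fin p', (x k) ^ 2 ≤ 1})
      ∂((volume {x : Fin p → ℝ | ∑ j : Fin p, (x j) ^ 2 ≤ 1})⁻¹ •
          volume.restrict {x : Fin p → ℝ | ∑ j : Fin p, (x j) ^ 2 ≤ 1}))
    = ((p : ℝ) - ∑ j : Fin p, (σ j) ^ 2) / ((p : ℝ) + 2)
      + ((p' : ℝ) - ∑ j : Fin p, (σ j) ^ 2) / ((p' : ℝ) + 2) := by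
  have hm1 : ((volume {x : Fin p → ℝ | ∑ j : Fin p, (x j) ^ 2 ≤ 1})⁻¹ •
      volume.restrict {x : Fin p → ℝ | ∑ j : Fin p, (x j) ^ 2 ≤ 1}) = ballMeasure p := rfl
  have hm2 : ((volume {x : Fin p' → ℝ | ∑ k : Fin p', (x k) ^ 2 ≤ 1})⁻¹ •
      volume.restrict {x : Fin p' → ℝ | ∑ k : Fin p', (x k) ^ 2 ≤ 1}) = ballMeasure p' := rfl
  rw [hm1, hm2]
  set A : Matrix (Fin p) (Fin p) ℝ := 1 - D * Dᵀ with hA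
  set Bm : Matrix (Fin p') (Fin p') ℝ := 1 - Dᵀ * D with hBm
  set M : Matrix (Fin p) (Fin p') ℝ := D - D * Dᵀ * D with hM
  -- inner integral
  have hinner : ∀ α : Fin p → ℝ,
      ∫ α' : Fin p' → ℝ,
        (α ⬝ᵥ (A *ᵥ α) + α' ⬝ᵥ (Bm *ᵥ α') + 2 * (α ⬝ᵥ (M *ᵥ α'))) ∂(ballMeasure p')
      = α ⬝ᵥ (A *ᵥ α) + Bm.trace / ((p' : ℝ) + 2) := by
    intro α
    have hI1 : Integrable (fun _ : Fin p' → ℝ => α ⬝ᵥ (A *ᵥ α)) (ballMeasure p') :=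
      integrable_const _
    have hI2 : Integrable (fun α' : Fin p' → ℝ => α' ⬝ᵥ (Bm *ᵥ α')) (ballMeasure p') :=
      integrable_ballMeasure p' (continuous_quadform p' Bm)
    have hI3 : Integrable (fun α' : Fin p' → ℝ => 2 * (α ⬝ᵥ (M *ᵥ α'))) (ballMeasure p') := by
      apply integrable_ballMeasure p'
      simp only [dotProduct, mulVec]
      fun_prop
    have hI12 : Integrable (fun α' : Fin p' → ℝ =>
        α ⬝ᵥ (A *ᵥ α) + α' ⬝ᵥ (Bm *ᵥ α')) (ballMeasure p') := hI1.add hI2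
    rw [integral_add hI12 hI3, integral_add hI1 hI2]
    have hcross : ∀ α' : Fin p' → ℝ,
        2 * (α ⬝ᵥ (M *ᵥ α')) = 2 * ∑ j, (∑ i, α i * M i j) * α' j := by
      intro α'
      congr 1
      simp only [dotProduct, mulVec, Finset.mul_sum]
      rw [Finset.sum_comm]
      apply Finset.sum_congr rfl
      intro j _
      rw [Finset.sum_mul]
      exact Finset.sum_congr rfl fun i _ => by ring
    simp_rw [hcross]
    rw [integral_const_mul, integral_linform p' (fun j => ∑ i, α i * M i j), mul_zero, add_zero]
    rw [integral_const, integral_quadform]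
    simp
  rw [integral_congr_ae (Filter.Eventually.of_forall hinner)]
  have hIq : Integrable (fun α : Fin p → ℝ => α ⬝ᵥ (A *ᵥ α)) (ballMeasure p) :=
    integrable_ballMeasure p (continuous_quadform p A)
  rw [integral_add hIq (integrable_const _), integral_quadform, integral_const]
  have htr := trace_DDT p p' hp D U V σ hU hV hD
  have hTA : A.trace = (p : ℝ) - ∑ j : Fin p, (σ j) ^ 2 := by
    rw [hA, Matrix.trace_sub, Matrix.trace_one, htr.1]
    simp
  have hTB : Bm.trace = (p' : ℝ) - ∑ j : Fin p, (σ j) ^ 2 := by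
    rw [hBm, Matrix.trace_sub, Matrix.trace_one, htr.2]
    simp
  rw [hTA, hTB]
  simp
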